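/- Let P be a real 3×3 symmetric matrix, ξ a unit vector in ℝ³ with Pξ = 0, and let {u, v, n} be an orthonormal basis of ℝ³ with ⟨ξ, n⟩ ≠ 0. For any λ > 0, det(I + λP) = (λ/⟨ξ, n⟩)²·det M, where M is the 2×2 matrix with entries M_{11} = ⟨Pu,u⟩ + (1 − ⟨ξ,u⟩²)/λ, M_{12} = M_{21} = ⟨Pu,v⟩ − ⟨ξ,u⟩⟨ξ,v⟩/λ, M_{22} = ⟨Pv,v⟩ + (1 − ⟨ξ,v⟩²)/λ. -/

import Mathlib

open Matrix

/-- Formula (5) of Lemma 2: for a symmetric `P` with `Pξ = 0`, `ξ` unit, `{u,v,n}` an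
orthonormal basis with `⟨ξ,n⟩ ≠ 0` and `λ > 0`,
`det(I + λP) = (λ/⟨ξ,n⟩)² det M` with `M` the tangential 2×2 Hessian matrix. -/
theorem det_one_add_smul_eq_det_M (P : Matrix (Fin 3) (Fin 3) ℝ) (hsymm : P.IsSymm)
    (ξ u v n : Fin 3 → ℝ)
    (hξ : ξ ⬝ᵥ ξ = 1) (hPξ : P.mulVec ξ = 0)
    (hu : u ⬝ᵥ u = 1) (hv : v ⬝ᵥ v = 1) (hn : n ⬝ᵥ n = 1)
    (huv : u ⬝ᵥ v = 0) (hun : u ⬝ᵥ n = 0) (hvn : v ⬝ᵥ n = 0)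
    (hξn : ξ ⬝ᵥ n ≠ 0) (lam : ℝ) (hlam : 0 < lam) :
    ((1 : Matrix (Fin 3) (Fin 3) ℝ) + lam • P).det =
      (lam / (ξ ⬝ᵥ n))^2 *
        (!![P.mulVec u ⬝ᵥ u + (1 - (ξ ⬝ᵥ u)^2) / lam,
            P.mulVec u ⬝ᵥ v - (ξ ⬝ᵥ u) * (ξ ⬝ᵥ v) / lam;
            P.mulVec u ⬝ᵥ v - (ξ ⬝ᵥ u) * (ξ ⬝ᵥ v) / lam,
            P.mulVec v ⬝ᵥ v + (1 - (ξ ⬝ᵥ v)^2) / lam] : Matrix (Fin 2) (Fin 2) ℝ).det := by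
  have hPs : ∀ x y : Fin 3 → ℝ, P.mulVec x ⬝ᵥ y = P.mulVec y ⬝ᵥ x := fun x y => by
    rw [dotProduct_comm, dotProduct_mulVec, ← mulVec_transpose, hsymm.eq]
  set Q : Matrix (Fin 3) (Fin 3) ℝ := Matrix.of ![u,v,n] with hQ
  have hQQt : Q * Qᵀ = 1 := by
    have hu' := hu; have hv' := hv; have hn' := hn
    have huv' := huv; have hun' := hun; have hvn' := hvn
    simp only [dotProduct, Fin.sum_univ_three] at hu' hv' hn' huv' hun' hvn'
    ext i j
    fin_cases i <;> fin_cases j <;>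
      simp [hQ, Matrix.mul_apply, Fin.sum_univ_three, Matrix.one_apply,
        Matrix.vecHead, Matrix.vecTail] <;>
      first
        | linear_combination hu' | linear_combination hv' | linear_combination hn'
        | linear_combination huv' | linear_combination hun' | linear_combination hvn'
  have hQtQ : Qᵀ * Q = 1 := mul_eq_one_comm.mp hQQt
  have hdec : ∀ x : Fin 3 → ℝ, (x ⬝ᵥ u) • u + (x ⬝ᵥ v) • v + (x ⬝ᵥ n) • n = x := by
    intro x
    have h : Qᵀ.mulVec (Q.mulVec x) = x := by rw [mulVec_mulVec, hQtQ, one_mulVec]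
    funext i
    have hi := congrFun h i
    simp [hQ, mulVec, dotProduct, Fin.sum_univ_three, Matrix.vecHead, Matrix.vecTail] at hi ⊢
    linear_combination hi
  -- scalar abbreviations
  set a := ξ ⬝ᵥ u with ha
  set b := ξ ⬝ᵥ v with hb
  set c := ξ ⬝ᵥ n with hc
  set α := P.mulVec u ⬝ᵥ u with hα
  set β := P.mulVec u ⬝ᵥ v with hβ
  set γ := P.mulVec v ⬝ᵥ v with hγ
  set p := P.mulVec n ⬝ᵥ u with hp
  set q := P.mulVec n ⬝ᵥ v with hq
  set r := P.mulVec n ⬝ᵥ n with hr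
  -- a² + b² + c² = 1
  have habc : a^2 + b^2 + c^2 = 1 := by
    have h := congrArg (fun w => ξ ⬝ᵥ w) (hdec ξ)
    simp only [dotProduct_add, dotProduct_smul, smul_eq_mul, hξ, ← ha, ← hb, ← hc,
      dotProduct_comm ξ u, dotProduct_comm ξ v, dotProduct_comm ξ n] at h
    linear_combination h
  -- Pξ = 0 decomposed
  have hPdec : a • P.mulVec u + b • P.mulVec v + c • P.mulVec n = 0 := by
    have h := congrArg P.mulVec (hdec ξ)
    rw [hPξ] at h
    simp only [mulVec_add, mulVec_smul] at h
    rw [← ha, ← hb, ← hc] at h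
    exact h
  have hrelu : a * α + b * β + c * p = 0 := by
    have h := congrArg (fun w => w ⬝ᵥ u) hPdec
    simp only [add_dotProduct, smul_dotProduct, smul_eq_mul, zero_dotProduct] at h
    rw [hPs v u] at h
    rw [← hα, ← hβ, ← hp] at h
    exact h
  have hrelv : a * β + b * γ + c * q = 0 := by
    have h := congrArg (fun w => w ⬝ᵥ v) hPdec
    simp only [add_dotProduct, smul_dotProduct, smul_eq_mul, zero_dotProduct] at h
    rw [← hβ, ← hγ, ← hq] at h
    exact h
  have hreln : a * p + b * q + c * r = 0 := by
    have h := congrArg (fun w => w ⬝ᵥ n) hPdec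
    simp only [add_dotProduct, smul_dotProduct, smul_eq_mul, zero_dotProduct] at h
    rw [hPs u n, hPs v n] at h
    rw [← hp, ← hq, ← hr] at h
    exact h
  -- determinant conjugation
  have hdet1 : Q.det * Q.det = 1 := by
    have h := congrArg Matrix.det hQQt
    rwa [det_mul, det_transpose, det_one] at h
  have hconj : ((1 : Matrix (Fin 3) (Fin 3) ℝ) + lam • P).det
      = (Q * ((1 : Matrix (Fin 3) (Fin 3) ℝ) + lam • P) * Qᵀ).det := by
    rw [det_mul, det_mul, det_transpose]
    linear_combination (-((1 : Matrix (Fin 3) (Fin 3) ℝ) + lam • P).det) * hdet1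
  -- entries of the conjugated matrix
  have hentry : ∀ (A : Matrix (Fin 3) (Fin 3) ℝ) i j,
      (Q * A * Qᵀ) i j = Q i ⬝ᵥ A.mulVec (Q j) := by
    intro A i j
    simp only [Matrix.mul_apply, transpose_apply, dotProduct, mulVec, Finset.sum_mul,
      Finset.mul_sum]
    rw [Finset.sum_comm]
    exact Finset.sum_congr rfl fun l _ => Finset.sum_congr rfl fun k _ => by ring
  have hQ0 : Q 0 = u := rfl
  have hQ1 : Q 1 = v := rfl
  have hQ2 : Q 2 = n := rfl
  have hB : Q * ((1 : Matrix (Fin 3) (Fin 3) ℝ) + lam • P) * Qᵀ =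
      !![1 + lam*α, lam*β, lam*p; lam*β, 1 + lam*γ, lam*q; lam*p, lam*q, 1 + lam*r] := by
    ext i j
    rw [hentry]
    fin_cases i <;> fin_cases j <;>
      simp [hQ0, hQ1, hQ2, add_mulVec, one_mulVec, smul_mulVec, dotProduct_add,
        dotProduct_smul, smul_eq_mul, hu, hv, hn, huv, hun, hvn,
        dotProduct_comm v u, dotProduct_comm n u, dotProduct_comm n v,
        dotProduct_comm u (P.mulVec u), dotProduct_comm u (P.mulVec v),
        dotProduct_comm u (P.mulVec n), dotProduct_comm v (P.mulVec u),
        dotProduct_comm v (P.mulVec v), dotProduct_comm v (P.mulVec n),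
        dotProduct_comm n (P.mulVec u), dotProduct_comm n (P.mulVec v),
        dotProduct_comm n (P.mulVec n),
        ← hα, ← hβ, ← hγ, ← hp, ← hq, ← hr, hPs v u, hPs u v, hPs u n, hPs v n,
        hPs n u, hPs n v]
  rw [hconj, hB]
  simp [Matrix.det_fin_three, Matrix.det_fin_two]
  have hlam0 : lam ≠ 0 := ne_of_gt hlam
  have hp2 : p = -(a*α + b*β)/c := by
    field_simp
    linear_combination hrelu
  have hq2 : q = -(a*β + b*γ)/c := by
    field_simp
    linear_combination hrelv
  have hr2 : r = (a^2*α + 2*a*b*β + b^2*γ)/c^2 := by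
    field_simp
    linear_combination c*hreln - a*hrelu - b*hrelv
  rw [hp2, hq2, hr2]
  field_simp
  linear_combination ((1 + (α+γ)*lam + (α*γ - β^2)*lam^2)) * habc
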